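/- Let σ = co{x₀, …, xₙ} ⊂ ℝⁿ be an n-simplex, let φ : U → ℝ and ζ : U → ℝᵐ be twice continuously differentiable on an open set U containing σ, and define M(x) = [[φ(x), ζ(x)ᵀ], [ζ(x), −I_m]]. Let β ≥ max over q,r ∈ {1,…,n} and ξ ∈ σ of |∂²φ/∂x⁽q⁾∂x⁽r⁾(ξ)|, let μ_k ≥ max over q,r ∈ {1,…,n} and ξ ∈ σ of |∂²ζ⁽ᵏ⁾/∂x⁽q⁾∂x⁽r⁾(ξ)| for each k ∈ {1,…,m}, and set c_j = n · max_{υ ∈ {0,…,n}} ‖x_j − x_υ‖₂² and E(x_j) = [[(1/2)(β c_j + Σ_{k=1}^{m} μ_k² c_j²), 0], [0, (1/2) I_m]]. If M(x_j) + E(x_j) ⪯ 0 holds at every vertex x_j, j = 0, …, n, then M(x) ⪯ 0 for every x ∈ σ. -/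

import Mathlib

open Matrix

/-- Euclidean norm on `ℝⁿ` (represented as `Fin n → ℝ`). -/
noncomputable def enorm2 {n : ℕ} (x : Fin n → ℝ) : ℝ := Real.sqrt (∑ i, x i ^ 2)

/-- Second partial derivative `∂²f/∂x⁽q⁾∂x⁽r⁾` of `f : ℝⁿ → ℝ` at `ξ`. -/
noncomputable def pd2 {n : ℕ} (f : (Fin n → ℝ) → ℝ) (q r : Fin n) (ξ : Fin n → ℝ) : ℝ :=
  fderiv ℝ (fun y => fderiv ℝ f y (Pi.single q 1)) ξ (Pi.single r 1)

/-- A real matrix is negative semidefinite iff its negation is positive semidefinite. -/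
def Matrix.NegSemidef {ι : Type*} [Fintype ι] (M : Matrix ι ι ℝ) : Prop :=
  (-M).PosSemidef

/-- The LMI `M(x) = [[φ(x), ζ(x)ᵀ], [ζ(x), −I_m]]`. -/
def Mlmi {n m : ℕ} (φ : (Fin n → ℝ) → ℝ) (ζ : (Fin n → ℝ) → (Fin m → ℝ))
    (x : Fin n → ℝ) : Matrix (Fin 1 ⊕ Fin m) (Fin 1 ⊕ Fin m) ℝ :=
  Matrix.fromBlocks
    (Matrix.of fun _ _ => φ x) (Matrix.of fun _ k => ζ x k)
    (Matrix.of fun k _ => ζ x k) (-1)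

/-- The error-bound matrix `E = [[½(β c + Σ_k μ_k² c²), 0], [0, ½ I_m]]`. -/
noncomputable def Elmi {m : ℕ} (β : ℝ) (μ : Fin m → ℝ) (c : ℝ) :
    Matrix (Fin 1 ⊕ Fin m) (Fin 1 ⊕ Fin m) ℝ :=
  Matrix.fromBlocks
    (Matrix.of fun _ _ => (1 / 2) * (β * c + ∑ k, μ k ^ 2 * c ^ 2)) 0
    0 ((1 / 2 : ℝ) • 1)

/-! ### Auxiliary lemmas -/

theorem quadform_M' {m : ℕ} (φv : ℝ) (ζv : Fin m → ℝ)
    (v : Fin 1 ⊕ Fin m → ℝ) :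
    star v ⬝ᵥ ((-(Matrix.fromBlocks (Matrix.of fun _ _ => φv) (Matrix.of fun _ k => ζv k)
      (Matrix.of fun k _ => ζv k) (-1) : Matrix (Fin 1 ⊕ Fin m) (Fin 1 ⊕ Fin m) ℝ)) *ᵥ v) =
      -φv * (v (Sum.inl 0))^2 - 2 * v (Sum.inl 0) * ∑ k, ζv k * v (Sum.inr k)
        + ∑ k, (v (Sum.inr k))^2 := by
  simp [dotProduct, mulVec, Fintype.sum_sum_type, Fin.sum_univ_one, Matrix.one_apply,
    Finset.mul_sum, mul_add, add_mul, Finset.sum_add_distrib, mul_comm, mul_assoc, mul_left_comm,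
    sq, sub_eq_add_neg, Finset.sum_ite_eq, neg_add, Finset.sum_neg_distrib]
  have h2 : ∑ x, ζv x * (2 * (v (Sum.inl 0) * v (Sum.inr x)))
      = 2 * (∑ x, ζv x * (v (Sum.inl 0) * v (Sum.inr x))) := by
    rw [Finset.mul_sum]; apply Finset.sum_congr rfl; intros; ring
  rw [h2]; ring

theorem herm_M' {m : ℕ} (φv : ℝ) (ζv : Fin m → ℝ) :
    (-(Matrix.fromBlocks (Matrix.of fun _ _ => φv) (Matrix.of fun _ k => ζv k)
      (Matrix.of fun k _ => ζv k) (-1) : Matrix (Fin 1 ⊕ Fin m) (Fin 1 ⊕ Fin m) ℝ)).IsHermitian := by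
  rw [Matrix.IsHermitian]
  ext i j
  cases i <;> cases j <;>
    simp [Matrix.conjTranspose_apply, Matrix.one_apply, eq_comm]

/-- Scalar condition implies the LMI is negative semidefinite. -/
theorem negSemidef_of_scalar {n m : ℕ} (φ : (Fin n → ℝ) → ℝ) (ζ : (Fin n → ℝ) → (Fin m → ℝ))
    (y : Fin n → ℝ) (h : φ y + ∑ k, ζ y k ^ 2 ≤ 0) : (Mlmi φ ζ y).NegSemidef := by
  refine Matrix.PosSemidef.of_dotProduct_mulVec_nonneg (herm_M' (φ y) (ζ y)) ?_
  intro v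
  rw [show Mlmi φ ζ y = Matrix.fromBlocks (Matrix.of fun _ _ => φ y)
    (Matrix.of fun _ k => ζ y k) (Matrix.of fun k _ => ζ y k) (-1) from rfl, quadform_M']
  set a := v (Sum.inl 0)
  set S := ∑ k, ζ y k * v (Sum.inr k) with hS
  set W := ∑ k, (v (Sum.inr k))^2 with hW
  set Z := ∑ k, ζ y k ^ 2 with hZ
  have hsum : ∑ k, (a * ζ y k - v (Sum.inr k))^2 = a^2 * Z - 2*a*S + W := by
    have expand : ∀ k, (a * ζ y k - v (Sum.inr k))^2
        = a^2 * ζ y k^2 - 2*(a*(ζ y k * v (Sum.inr k))) + v (Sum.inr k)^2 := fun k => by ring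
    simp only [expand, Finset.sum_add_distrib, Finset.sum_sub_distrib, ← Finset.mul_sum]
    rw [hS, hW, hZ]
    ring
  have hnn : 0 ≤ ∑ k, (a * ζ y k - v (Sum.inr k))^2 :=
    Finset.sum_nonneg fun k _ => sq_nonneg _
  nlinarith [sq_nonneg a, hsum, hnn, h]

/-- The scalar inequality extracted from a vertex constraint. -/
theorem vertex_scalar' {n m : ℕ} (φ : (Fin n → ℝ) → ℝ) (ζ : (Fin n → ℝ) → (Fin m → ℝ))
    (p : Fin n → ℝ) (β : ℝ) (μ : Fin m → ℝ) (c : ℝ)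
    (h : (Mlmi φ ζ p + Elmi β μ c).NegSemidef) :
    φ p + (1/2) * (β * c + ∑ k, μ k ^ 2 * c ^ 2) + 2 * ∑ k, ζ p k ^ 2 ≤ 0 := by
  set e := (1/2) * (β * c + ∑ k, μ k ^ 2 * c ^ 2) with he
  have hq := h.dotProduct_mulVec_nonneg (Sum.elim (fun _ => 1) (fun k => 2 * ζ p k))
  have hval : star (Sum.elim (fun _ => (1:ℝ)) (fun k => 2 * ζ p k)) ⬝ᵥ
      ((-((Matrix.fromBlocks (Matrix.of fun _ _ => φ p) (Matrix.of fun _ k => ζ p k)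
        (Matrix.of fun k _ => ζ p k) (-1) : Matrix (Fin 1 ⊕ Fin m) (Fin 1 ⊕ Fin m) ℝ) +
        Matrix.fromBlocks (Matrix.of fun _ _ => e) 0 0 ((1/2 : ℝ) • 1))) *ᵥ
        (Sum.elim (fun _ => 1) (fun k => 2 * ζ p k)))
      = -φ p - e - 2 * ∑ k, ζ p k ^ 2 := by
    simp [dotProduct, mulVec, Fintype.sum_sum_type, Fin.sum_univ_one, Matrix.one_apply,
      Finset.mul_sum, mul_add, add_mul, Finset.sum_add_distrib, mul_comm, mul_assoc,
      mul_left_comm, sq, sub_eq_add_neg, Finset.sum_ite_eq, neg_add, Finset.sum_neg_distrib]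
    ring_nf
    have e1 : ∑ x, ζ p x ^ 2 * 2 = ∑ x, ζ p x * ζ p x * 2 := by
      apply Finset.sum_congr rfl; intros; ring
    have e3 : ∑ x, c ^ 2 * μ x ^ 2 = ∑ x, μ x ^ 2 * c ^ 2 := by
      apply Finset.sum_congr rfl; intros; ring
    have e2 : ∑ x, ζ p x * ζ p x * 4 = 2 * ∑ x, ζ p x * ζ p x * 2 := by
      rw [Finset.mul_sum]; apply Finset.sum_congr rfl; intros; ring
    rw [e1, show ∑ x, ζ p x ^ 2 * 4 = 2 * ∑ x, ζ p x * ζ p x * 2 by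
      rw [Finset.mul_sum]; apply Finset.sum_congr rfl; intros; ring]; ring
  rw [show Mlmi φ ζ p + Elmi β μ c = Matrix.fromBlocks (Matrix.of fun _ _ => φ p)
    (Matrix.of fun _ k => ζ p k) (Matrix.of fun k _ => ζ p k) (-1) +
    Matrix.fromBlocks (Matrix.of fun _ _ => e) 0 0 ((1/2 : ℝ) • 1) from rfl] at hq
  rw [hval] at hq
  linarith

theorem taylor1d' {h h' h'' : ℝ → ℝ} {L : ℝ}
    (hd1 : ∀ t ∈ Set.Icc (0:ℝ) 1, HasDerivAt h (h' t) t)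
    (hd2 : ∀ t ∈ Set.Icc (0:ℝ) 1, HasDerivAt h' (h'' t) t)
    (hb : ∀ t ∈ Set.Icc (0:ℝ) 1, |h'' t| ≤ L) :
    |h 1 - h 0 - h' 0| ≤ L / 2 := by
  have h01 : (0:ℝ) ∈ Set.Icc (0:ℝ) 1 := by norm_num
  have h11 : (1:ℝ) ∈ Set.Icc (0:ℝ) 1 := by norm_num
  have step1 : ∀ t ∈ Set.Icc (0:ℝ) 1, |h' t - h' 0| ≤ L * t := by
    intro t ht
    have := Convex.norm_image_sub_le_of_norm_hasDerivWithin_le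
      (f := h') (f' := h'') (s := Set.Icc (0:ℝ) 1)
      (fun u hu => (hd2 u hu).hasDerivWithinAt) (fun u hu => hb u hu)
      (convex_Icc 0 1) h01 ht
    simpa [Real.norm_eq_abs, abs_of_nonneg ht.1] using this
  have mono1 : MonotoneOn (fun t => L/2 * t^2 + t * h' 0 + h 0 - h t) (Set.Icc 0 1) := by
    apply monotoneOn_of_deriv_nonneg (convex_Icc 0 1)
    · apply ContinuousOn.sub
      · fun_prop
      · intro t ht; exact (hd1 t ht).continuousAt.continuousWithinAt
    · intro t ht
      rw [interior_Icc] at ht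
      exact (((((hasDerivAt_pow 2 t).const_mul (L/2)).add
        ((hasDerivAt_id t).mul_const (h' 0))).add_const (h 0)).sub
        (hd1 t (Set.mem_Icc_of_Ioo ht))).differentiableAt.differentiableWithinAt
    · intro t ht
      rw [interior_Icc] at ht
      have hD : HasDerivAt (fun t => L/2 * t^2 + t * h' 0 + h 0 - h t)
          (L/2 * ((2:ℕ) * t^(2-1)) + 1 * h' 0 - h' t) t := by
        exact (((((hasDerivAt_pow 2 t).const_mul (L/2)).add
          ((hasDerivAt_id t).mul_const (h' 0))).add_const (h 0)).sub
          (hd1 t (Set.mem_Icc_of_Ioo ht)))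
      rw [hD.deriv]
      have := abs_le.1 (step1 t (Set.mem_Icc_of_Ioo ht))
      push_cast
      simp only [pow_one]
      nlinarith [this.2]
  have mono2 : MonotoneOn (fun t => L/2 * t^2 - t * h' 0 - h 0 + h t) (Set.Icc 0 1) := by
    apply monotoneOn_of_deriv_nonneg (convex_Icc 0 1)
    · apply ContinuousOn.add
      · fun_prop
      · intro t ht; exact (hd1 t ht).continuousAt.continuousWithinAt
    · intro t ht
      rw [interior_Icc] at ht
      exact (((((hasDerivAt_pow 2 t).const_mul (L/2)).sub
        ((hasDerivAt_id t).mul_const (h' 0))).sub_const (h 0)).add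
        (hd1 t (Set.mem_Icc_of_Ioo ht))).differentiableAt.differentiableWithinAt
    · intro t ht
      rw [interior_Icc] at ht
      have hD : HasDerivAt (fun t => L/2 * t^2 - t * h' 0 - h 0 + h t)
          (L/2 * ((2:ℕ) * t^(2-1)) - 1 * h' 0 + h' t) t := by
        exact (((((hasDerivAt_pow 2 t).const_mul (L/2)).sub
          ((hasDerivAt_id t).mul_const (h' 0))).sub_const (h 0)).add
          (hd1 t (Set.mem_Icc_of_Ioo ht)))
      rw [hD.deriv]
      have := abs_le.1 (step1 t (Set.mem_Icc_of_Ioo ht))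
      push_cast
      simp only [pow_one]
      nlinarith [this.1]
  have m1 := mono1 h01 h11 zero_le_one
  have m2 := mono2 h01 h11 zero_le_one
  simp only [one_pow, mul_one, pow_two, mul_zero, zero_mul] at m1 m2
  rw [abs_le]
  constructor <;> nlinarith

theorem pd2_eq' {n : ℕ} {U : Set (Fin n → ℝ)} (hU : IsOpen U) {g : (Fin n → ℝ) → ℝ}
    (hg : ContDiffOn ℝ 2 g U) {ξ : Fin n → ℝ} (hξ : ξ ∈ U) (q r : Fin n) :
    pd2 g q r ξ = (fderiv ℝ (fderiv ℝ g) ξ (Pi.single r 1)) (Pi.single q 1) := by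
  have hcd : ContDiffAt ℝ 2 g ξ := (hg.contDiffAt (hU.mem_nhds hξ))
  have hdF : DifferentiableAt ℝ (fderiv ℝ g) ξ :=
    (hcd.fderiv_right (m := 1) (by norm_num)).differentiableAt one_ne_zero
  rw [pd2, fderiv_clm_apply hdF (differentiableAt_const _)]
  simp

theorem bilin_bound' {n : ℕ} (B : (Fin n → ℝ) →L[ℝ] (Fin n → ℝ) →L[ℝ] ℝ) {K : ℝ} (hK0 : 0 ≤ K)
    (hB : ∀ q r : Fin n, |(B (Pi.single r (1:ℝ))) (Pi.single q (1:ℝ))| ≤ K) (v : Fin n → ℝ) :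
    |(B v) v| ≤ K * n * ∑ i, v i ^ 2 := by
  have hv : v = ∑ r, v r • (Pi.single r (1:ℝ) : Fin n → ℝ) := by
    ext j
    simp [Pi.single_apply]
  have expand : (B v) v = ∑ r, ∑ q, v r * (v q * (B (Pi.single q (1:ℝ))) (Pi.single r (1:ℝ))) := by
    conv_lhs => rw [hv]
    simp only [map_sum, _root_.map_smul, ContinuousLinearMap.sum_apply,
      ContinuousLinearMap.smul_apply, smul_eq_mul, Finset.mul_sum]
  rw [expand]
  calc |∑ r, ∑ q, v r * (v q * (B (Pi.single q (1:ℝ))) (Pi.single r (1:ℝ)))|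
      ≤ ∑ r, |∑ q, v r * (v q * (B (Pi.single q (1:ℝ))) (Pi.single r (1:ℝ)))| :=
        Finset.abs_sum_le_sum_abs _ _
    _ ≤ ∑ r : Fin n, ∑ q : Fin n, |v r| * (|v q| * K) := by
        apply Finset.sum_le_sum
        intro r _
        refine le_trans (Finset.abs_sum_le_sum_abs _ _) ?_
        apply Finset.sum_le_sum
        intro q _
        rw [abs_mul, abs_mul]
        exact mul_le_mul_of_nonneg_left
          (mul_le_mul_of_nonneg_left (hB r q) (abs_nonneg _)) (abs_nonneg _)
    _ = (∑ i, |v i|) ^ 2 * K := by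
        rw [sq, Finset.sum_mul_sum, Finset.sum_mul]
        apply Finset.sum_congr rfl
        intro r _
        rw [Finset.sum_mul]
        apply Finset.sum_congr rfl
        intro q _
        ring
    _ ≤ ((n : ℝ) * ∑ i, v i ^ 2) * K := by
        apply mul_le_mul_of_nonneg_right _ hK0
        have := sq_sum_le_card_mul_sum_sq (s := Finset.univ) (f := fun i : Fin n => |v i|)
        simpa [sq_abs] using this
    _ = K * n * ∑ i, v i ^ 2 := by ring

theorem second_order_bound' {n : ℕ} {U : Set (Fin n → ℝ)} (hU : IsOpen U)
    {g : (Fin n → ℝ) → ℝ} (hg : ContDiffOn ℝ 2 g U)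
    {s : Set (Fin n → ℝ)} (hs : Convex ℝ s) (hsU : s ⊆ U)
    {K : ℝ} (hK0 : 0 ≤ K) (hK : ∀ q r : Fin n, ∀ ξ ∈ s, |pd2 g q r ξ| ≤ K)
    {y p : Fin n → ℝ} (hy : y ∈ s) (hp : p ∈ s) :
    |g p - g y - fderiv ℝ g y (p - y)| ≤ (K * n * ∑ i, (p i - y i) ^ 2) / 2 := by
  set v : Fin n → ℝ := p - y with hvdef
  set γ : ℝ → (Fin n → ℝ) := fun t => y + t • v with hγdef
  have hγs : ∀ t ∈ Set.Icc (0:ℝ) 1, γ t ∈ s := fun t ht => hs.add_smul_sub_mem hy hp ht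
  have hγU : ∀ t ∈ Set.Icc (0:ℝ) 1, γ t ∈ U := fun t ht => hsU (hγs t ht)
  have hγd : ∀ t : ℝ, HasDerivAt γ v t := by
    intro t
    simpa [hγdef] using ((hasDerivAt_id t).smul_const v).const_add y
  have hcd : ∀ t ∈ Set.Icc (0:ℝ) 1, ContDiffAt ℝ 2 g (γ t) := fun t ht =>
    hg.contDiffAt (hU.mem_nhds (hγU t ht))
  have hdF : ∀ t ∈ Set.Icc (0:ℝ) 1, DifferentiableAt ℝ (fderiv ℝ g) (γ t) := fun t ht =>
    ((hcd t ht).fderiv_right (m := 1) (by norm_num)).differentiableAt one_ne_zero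
  have hd1 : ∀ t ∈ Set.Icc (0:ℝ) 1,
      HasDerivAt (fun t => g (γ t)) (fderiv ℝ g (γ t) v) t := by
    intro t ht
    exact (((hcd t ht).differentiableAt (by norm_num)).hasFDerivAt).comp_hasDerivAt t (hγd t)
  have hd2 : ∀ t ∈ Set.Icc (0:ℝ) 1,
      HasDerivAt (fun t => fderiv ℝ g (γ t) v) ((fderiv ℝ (fderiv ℝ g) (γ t) v) v) t := by
    intro t ht
    have h1 : HasDerivAt (fun t => fderiv ℝ g (γ t)) (fderiv ℝ (fderiv ℝ g) (γ t) v) t :=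
      ((hdF t ht).hasFDerivAt).comp_hasDerivAt t (hγd t)
    have := h1.clm_apply (hasDerivAt_const t v)
    simpa using this
  have hbound : ∀ t ∈ Set.Icc (0:ℝ) 1,
      |(fderiv ℝ (fderiv ℝ g) (γ t) v) v| ≤ K * n * ∑ i, v i ^ 2 := by
    intro t ht
    apply bilin_bound' _ hK0 _ v
    intro q r
    rw [← pd2_eq' hU hg (hγU t ht) q r]
    exact hK q r _ (hγs t ht)
  have key := taylor1d' hd1 hd2 hbound
  have hγ0 : γ 0 = y := by simp [hγdef]
  have hγ1 : γ 1 = p := by simp [hγdef, hvdef]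
  rw [hγ0, hγ1] at key
  have : ∀ i, v i = p i - y i := fun i => rfl
  simpa [this] using key

theorem hull_rep' {n N : ℕ} (x : Fin N → (Fin n → ℝ)) {y : Fin n → ℝ}
    (hy : y ∈ convexHull ℝ (Set.range x)) :
    ∃ w : Fin N → ℝ, (∀ i, 0 ≤ w i) ∧ ∑ i, w i = 1 ∧ ∑ i, w i • x i = y := by
  rw [convexHull_range_eq_exists_affineCombination] at hy
  obtain ⟨s, w, hw0, hw1, hwx⟩ := hy
  refine ⟨fun i => if i ∈ s then w i else 0, ?_, ?_, ?_⟩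
  · intro i
    by_cases h : i ∈ s
    · simpa [h] using hw0 i h
    · simp [h]
  · rw [← hw1]
    exact (Finset.sum_subset s.subset_univ (fun i _ hi => by simp [hi])).symm.trans
      (Finset.sum_congr rfl fun i hi => by simp [hi])
  · rw [← hwx, s.affineCombination_eq_linear_combination _ _ hw1]
    exact (Finset.sum_subset s.subset_univ (fun i _ hi => by simp [hi])).symm.trans
      (Finset.sum_congr rfl fun i hi => by simp [hi])

theorem enorm2_eq_norm' {n : ℕ} (z : Fin n → ℝ) :
    enorm2 z = ‖(WithLp.equiv 2 (Fin n → ℝ)).symm z‖ := by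
  rw [EuclideanSpace.norm_eq]
  simp [enorm2, Real.norm_eq_abs, sq_abs]

theorem enorm2_sq' {n : ℕ} (z : Fin n → ℝ) : enorm2 z ^ 2 = ∑ i, z i ^ 2 :=
  Real.sq_sqrt (Finset.sum_nonneg fun i _ => sq_nonneg _)

theorem enorm2_nonneg' {n : ℕ} (z : Fin n → ℝ) : 0 ≤ enorm2 z := Real.sqrt_nonneg _

theorem dist_sq_le' {n N : ℕ} (x : Fin N → Fin n → ℝ) (w : Fin N → ℝ) (hw0 : ∀ i, 0 ≤ w i)
    (hw1 : ∑ i, w i = 1) {y : Fin n → ℝ} (hy : ∑ i, w i • x i = y) (j : Fin N) :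
    ∑ i, (x j i - y i) ^ 2 ≤ ⨆ υ, enorm2 (x j - x υ) ^ 2 := by
  have hbdd : BddAbove (Set.range fun υ => enorm2 (x j - x υ) ^ 2) :=
    Set.Finite.bddAbove (Set.finite_range _)
  set S := ⨆ υ, enorm2 (x j - x υ) ^ 2 with hSdef
  have hS0 : 0 ≤ S := le_trans (by positivity) (le_ciSup hbdd j)
  have hle : ∀ υ, enorm2 (x j - x υ) ≤ Real.sqrt S := fun υ =>
    (Real.le_sqrt (enorm2_nonneg' _) hS0).2 (le_ciSup hbdd υ)
  have hrep : x j - y = ∑ υ, w υ • (x j - x υ) := by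
    rw [← hy]
    simp only [smul_sub]
    rw [Finset.sum_sub_distrib, ← Finset.sum_smul, hw1, one_smul]
  have tri : enorm2 (x j - y) ≤ ∑ υ, w υ * enorm2 (x j - x υ) := by
    rw [hrep, enorm2_eq_norm']
    have : (WithLp.equiv 2 (Fin n → ℝ)).symm (∑ υ, w υ • (x j - x υ))
        = ∑ υ, w υ • (WithLp.equiv 2 (Fin n → ℝ)).symm (x j - x υ) :=
      by simp [WithLp.toLp_sum]
    rw [this]
    refine (norm_sum_le _ _).trans ?_
    apply Finset.sum_le_sum
    intro υ _
    rw [norm_smul, Real.norm_eq_abs, abs_of_nonneg (hw0 υ), enorm2_eq_norm']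
  have tri2 : enorm2 (x j - y) ≤ Real.sqrt S := by
    refine tri.trans ?_
    calc ∑ υ, w υ * enorm2 (x j - x υ) ≤ ∑ υ, w υ * Real.sqrt S := by
          apply Finset.sum_le_sum
          intro υ _
          exact mul_le_mul_of_nonneg_left (hle υ) (hw0 υ)
      _ = Real.sqrt S := by rw [← Finset.sum_mul, hw1, one_mul]
  calc ∑ i, (x j i - y i) ^ 2 = enorm2 (x j - y) ^ 2 := by
        rw [enorm2_sq']
        apply Finset.sum_congr rfl
        intro i _
        simp [Pi.sub_apply]
    _ ≤ Real.sqrt S ^ 2 := by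
        apply pow_le_pow_left₀ (enorm2_nonneg' _) tri2 2
    _ = S := Real.sq_sqrt hS0

theorem jensen_sq' {N : ℕ} (w a : Fin N → ℝ) (hw0 : ∀ i, 0 ≤ w i) (hw1 : ∑ i, w i = 1) :
    (∑ i, w i * a i) ^ 2 ≤ ∑ i, w i * a i ^ 2 := by
  have key := Finset.sum_mul_sq_le_sq_mul_sq Finset.univ
    (fun i => Real.sqrt (w i)) (fun i => Real.sqrt (w i) * a i)
  have h1 : ∀ i, Real.sqrt (w i) * (Real.sqrt (w i) * a i) = w i * a i := fun i => by
    rw [← mul_assoc, Real.mul_self_sqrt (hw0 i)]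
  have h2 : ∀ i, Real.sqrt (w i) ^ 2 = w i := fun i => Real.sq_sqrt (hw0 i)
  have h3 : ∀ i, (Real.sqrt (w i) * a i) ^ 2 = w i * a i ^ 2 := fun i => by
    rw [mul_pow, Real.sq_sqrt (hw0 i)]
  simp only [h1, h2, h3, hw1, one_mul] at key
  exact key

/-- (Theorem 1 of the paper, second part.) With the setup of the LMI
error bound on a simplex, if `M(x_j) + E(x_j) ⪯ 0` at every vertex `x_j` of the simplex
`σ = co{x₀,…,xₙ}`, then `M(x) ⪯ 0` for every `x ∈ σ`. -/
theorem lmi_vertex_constraints_imply_lmi_on_simplex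
    {n m : ℕ} (hn : 0 < n)
    (x : Fin (n + 1) → (Fin n → ℝ)) (hx : AffineIndependent ℝ x)
    (U : Set (Fin n → ℝ)) (hU : IsOpen U)
    (hσU : convexHull ℝ (Set.range x) ⊆ U)
    (φ : (Fin n → ℝ) → ℝ) (hφ : ContDiffOn ℝ 2 φ U)
    (ζ : (Fin n → ℝ) → (Fin m → ℝ)) (hζ : ContDiffOn ℝ 2 ζ U)
    (β : ℝ)
    (hβ : ∀ (q r : Fin n), ∀ ξ ∈ convexHull ℝ (Set.range x), |pd2 φ q r ξ| ≤ β)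
    (μ : Fin m → ℝ)
    (hμ : ∀ (k : Fin m) (q r : Fin n), ∀ ξ ∈ convexHull ℝ (Set.range x),
      |pd2 (fun z => ζ z k) q r ξ| ≤ μ k)
    (c : Fin (n + 1) → ℝ)
    (hc : ∀ j, c j = n * (⨆ υ : Fin (n + 1), enorm2 (x j - x υ) ^ 2))
    (hvertex : ∀ j : Fin (n + 1), (Mlmi φ ζ (x j) + Elmi β μ (c j)).NegSemidef) :
    ∀ y ∈ convexHull ℝ (Set.range x), (Mlmi φ ζ y).NegSemidef := by
  intro y hy
  classical
  have hσconv : Convex ℝ (convexHull ℝ (Set.range x)) := convex_convexHull ℝ _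
  obtain ⟨w, hw0, hw1, hwy⟩ := hull_rep' x hy
  have hxσ : ∀ j, x j ∈ convexHull ℝ (Set.range x) := fun j =>
    subset_convexHull ℝ _ ⟨j, rfl⟩
  have hβ0 : 0 ≤ β := le_trans (abs_nonneg _) (hβ ⟨0, hn⟩ ⟨0, hn⟩ (x 0) (hxσ 0))
  have hμ0 : ∀ k, 0 ≤ μ k := fun k =>
    le_trans (abs_nonneg _) (hμ k ⟨0, hn⟩ ⟨0, hn⟩ (x 0) (hxσ 0))
  obtain ⟨ee, heedef⟩ : ∃ ee : Fin (n+1) → ℝ,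
      ∀ j, ee j = (n : ℝ) * ∑ i, (x j i - y i) ^ 2 := ⟨_, fun j => rfl⟩
  have hee0 : ∀ j, 0 ≤ ee j := fun j => by
    rw [heedef]
    exact mul_nonneg (Nat.cast_nonneg n) (Finset.sum_nonneg fun i _ => sq_nonneg _)
  have heec : ∀ j, ee j ≤ c j := by
    intro j
    rw [heedef, hc j]
    exact mul_le_mul_of_nonneg_left (dist_sq_le' x w hw0 hw1 hwy j) (Nat.cast_nonneg n)
  -- Taylor bounds
  have hφT : ∀ j, |φ (x j) - φ y - fderiv ℝ φ y (x j - y)| ≤ β * ee j / 2 := by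
    intro j
    have h2 := second_order_bound' hU hφ hσconv hσU hβ0
      (fun q r ξ hξ => hβ q r ξ hξ) hy (hxσ j)
    exact h2.trans_eq (by rw [heedef]; ring)
  have hζk : ∀ k, ContDiffOn ℝ 2 (fun z => ζ z k) U := fun k =>
    (ContinuousLinearMap.proj (R := ℝ) (φ := fun _ : Fin m => ℝ) k).contDiff.comp_contDiffOn hζ
  have hζT : ∀ k j, |ζ (x j) k - ζ y k - fderiv ℝ (fun z => ζ z k) y (x j - y)|
      ≤ μ k * ee j / 2 := by
    intro k j
    have h2 := second_order_bound' hU (hζk k) hσconv hσU (hμ0 k)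
      (fun q r ξ hξ => hμ k q r ξ hξ) hy (hxσ j)
    exact h2.trans_eq (by rw [heedef]; ring)
  -- vanishing of the linear terms
  have hv0 : ∑ j, w j • (x j - y) = 0 := by
    simp only [smul_sub]
    rw [Finset.sum_sub_distrib, hwy, ← Finset.sum_smul, hw1, one_smul, sub_self]
  have hlin : ∀ F : (Fin n → ℝ) →L[ℝ] ℝ, ∑ j, w j * F (x j - y) = 0 := by
    intro F
    have hFs : F (∑ j, w j • (x j - y)) = ∑ j, w j * F (x j - y) := by
      rw [map_sum]
      apply Finset.sum_congr rfl
      intro j _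
      rw [F.map_smul]
      rfl
    rw [← hFs, hv0, map_zero]
  obtain ⟨D, hDdef⟩ : ∃ D : ℝ, D = ∑ j, w j * ee j := ⟨_, rfl⟩
  have hD0 : 0 ≤ D := hDdef ▸ Finset.sum_nonneg fun j _ => mul_nonneg (hw0 j) (hee0 j)
  -- averaged Taylor bound for φ
  have hP1 : φ y ≤ ∑ j, w j * φ (x j) + β / 2 * D := by
    have hstep : ∀ j, w j * φ y
        ≤ w j * (φ (x j) - fderiv ℝ φ y (x j - y) + β * ee j / 2) := by
      intro j
      apply mul_le_mul_of_nonneg_left _ (hw0 j)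
      have := (abs_le.1 (hφT j)).1
      linarith
    calc φ y = ∑ j, w j * φ y := by rw [← Finset.sum_mul, hw1, one_mul]
      _ ≤ ∑ j, w j * (φ (x j) - fderiv ℝ φ y (x j - y) + β * ee j / 2) :=
          Finset.sum_le_sum fun j _ => hstep j
      _ = ∑ j, w j * φ (x j) - ∑ j, w j * fderiv ℝ φ y (x j - y)
            + ∑ j, w j * (β * ee j / 2) := by
          simp only [mul_sub, mul_add]
          rw [Finset.sum_add_distrib, Finset.sum_sub_distrib]
      _ = ∑ j, w j * φ (x j) + β / 2 * D := by
          rw [hlin (fderiv ℝ φ y), hDdef, Finset.mul_sum, sub_zero]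
          congr 1
          apply Finset.sum_congr rfl
          intros
          ring
  -- averaged Taylor bound for ζ components
  obtain ⟨A, hAdef⟩ : ∃ A : Fin m → ℝ, ∀ k, A k = ∑ j, w j * ζ (x j) k := ⟨_, fun k => rfl⟩
  have hAsq : ∀ k, A k ^ 2 ≤ ∑ j, w j * ζ (x j) k ^ 2 := fun k => by
    rw [hAdef]; exact jensen_sq' w _ hw0 hw1
  have hDsq : D ^ 2 ≤ ∑ j, w j * ee j ^ 2 := by
    rw [hDdef]; exact jensen_sq' w ee hw0 hw1
  have hζdev : ∀ k, |ζ y k - A k| ≤ μ k / 2 * D := by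
    intro k
    have heq : ζ y k - A k = ∑ j, w j *
        (ζ y k - ζ (x j) k + fderiv ℝ (fun z => ζ z k) y (x j - y)) := by
      simp only [mul_add, mul_sub]
      rw [Finset.sum_add_distrib, Finset.sum_sub_distrib, hlin (fderiv ℝ (fun z => ζ z k) y),
        add_zero, ← Finset.sum_mul, hw1, one_mul, hAdef]
    rw [heq]
    refine (Finset.abs_sum_le_sum_abs _ _).trans ?_
    calc ∑ j, |w j * (ζ y k - ζ (x j) k + fderiv ℝ (fun z => ζ z k) y (x j - y))|
        ≤ ∑ j, w j * (μ k * ee j / 2) := by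
          apply Finset.sum_le_sum
          intro j _
          rw [abs_mul, abs_of_nonneg (hw0 j)]
          apply mul_le_mul_of_nonneg_left _ (hw0 j)
          rw [show ζ y k - ζ (x j) k + fderiv ℝ (fun z => ζ z k) y (x j - y)
            = -(ζ (x j) k - ζ y k - fderiv ℝ (fun z => ζ z k) y (x j - y)) by ring, abs_neg]
          exact hζT k j
      _ = μ k / 2 * D := by
          rw [hDdef, Finset.mul_sum]
          apply Finset.sum_congr rfl
          intros
          ring
  have hζsq : ∀ k, ζ y k ^ 2
      ≤ 2 * ∑ j, w j * ζ (x j) k ^ 2 + μ k ^ 2 / 2 * ∑ j, w j * ee j ^ 2 := by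
    intro k
    have h1 : (ζ y k - A k) ^ 2 ≤ (μ k / 2 * D) ^ 2 := by
      have h := hζdev k
      nlinarith [abs_nonneg (ζ y k - A k), sq_abs (ζ y k - A k)]
    have h2 : ζ y k ^ 2 ≤ 2 * A k ^ 2 + 2 * (ζ y k - A k) ^ 2 := by
      nlinarith [sq_nonneg (A k - (ζ y k - A k))]
    have h5 : μ k ^ 2 / 2 * D ^ 2 ≤ μ k ^ 2 / 2 * ∑ j, w j * ee j ^ 2 :=
      mul_le_mul_of_nonneg_left hDsq (by positivity)
    have h6 : 2 * A k ^ 2 ≤ 2 * ∑ j, w j * ζ (x j) k ^ 2 := by linarith [hAsq k]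
    nlinarith [h1, h2, h5, h6]
  have hsumζ : ∑ k, ζ y k ^ 2 ≤ 2 * ∑ j, w j * (∑ k, ζ (x j) k ^ 2)
      + (∑ k, μ k ^ 2) / 2 * ∑ j, w j * ee j ^ 2 := by
    calc ∑ k, ζ y k ^ 2
        ≤ ∑ k, (2 * ∑ j, w j * ζ (x j) k ^ 2 + μ k ^ 2 / 2 * ∑ j, w j * ee j ^ 2) :=
          Finset.sum_le_sum fun k _ => hζsq k
      _ = 2 * ∑ j, w j * (∑ k, ζ (x j) k ^ 2)
            + (∑ k, μ k ^ 2) / 2 * ∑ j, w j * ee j ^ 2 := by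
          rw [Finset.sum_add_distrib]
          congr 1
          · rw [← Finset.mul_sum, Finset.sum_comm]
            congr 1
            apply Finset.sum_congr rfl
            intros
            rw [← Finset.mul_sum]
          · rw [← Finset.sum_mul, ← Finset.sum_div]
  -- per-vertex scalar bound
  have bound_j : ∀ j, φ (x j) + 2 * ∑ k, ζ (x j) k ^ 2 + β / 2 * ee j
      + (∑ k, μ k ^ 2) / 2 * ee j ^ 2 ≤ 0 := by
    intro j
    have hv := vertex_scalar' φ ζ (x j) β μ (c j) (hvertex j)
    have hc2 : ee j ^ 2 ≤ c j ^ 2 := pow_le_pow_left₀ (hee0 j) (heec j) 2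
    have hμsum : 0 ≤ ∑ k, μ k ^ 2 := Finset.sum_nonneg fun k _ => sq_nonneg _
    have hsum_eq : ∑ k, μ k ^ 2 * c j ^ 2 = (∑ k, μ k ^ 2) * c j ^ 2 := (Finset.sum_mul _ _ _).symm
    rw [hsum_eq] at hv
    nlinarith [mul_le_mul_of_nonneg_left (heec j) hβ0,
      mul_le_mul_of_nonneg_left hc2 hμsum]
  -- combine
  have hcomb : ∑ j, w j * φ (x j) + β / 2 * D + (2 * ∑ j, w j * (∑ k, ζ (x j) k ^ 2)
      + (∑ k, μ k ^ 2) / 2 * ∑ j, w j * ee j ^ 2)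
      = ∑ j, w j * (φ (x j) + 2 * ∑ k, ζ (x j) k ^ 2 + β / 2 * ee j
        + (∑ k, μ k ^ 2) / 2 * ee j ^ 2) := by
    rw [hDdef, Finset.mul_sum, Finset.mul_sum, Finset.mul_sum,
      ← Finset.sum_add_distrib, ← Finset.sum_add_distrib, ← Finset.sum_add_distrib]
    apply Finset.sum_congr rfl
    intros
    ring
  have hle0 : ∑ j, w j * (φ (x j) + 2 * ∑ k, ζ (x j) k ^ 2 + β / 2 * ee j
      + (∑ k, μ k ^ 2) / 2 * ee j ^ 2) ≤ 0 := by
    apply Finset.sum_nonpos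
    intro j _
    have := mul_le_mul_of_nonneg_left (bound_j j) (hw0 j)
    simpa using this
  have final : φ y + ∑ k, ζ y k ^ 2 ≤ 0 := by linarith
  exact negSemidef_of_scalar φ ζ y final
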